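/- Let u, v ∈ ℂ. There exists β ∈ ℂ such that 𝔮_u + β·𝔮_v ∈ D(T) if and only if A(u,v) = 0, and in the affirmative case β is uniquely determined and equals −C(u,v). -/

import Mathlib

open Filter Topology MeasureTheory

noncomputable section

def jacobiMul (a b : ℕ → ℝ) (c : ℕ → ℂ) : ℕ → ℂ
  | 0 => (b 0 : ℂ) * c 0 + (a 0 : ℂ) * c 1
  | n + 1 => (a n : ℂ) * c n + (b (n + 1) : ℂ) * c (n + 1) + (a (n + 1) : ℂ) * c (n + 2)

/-- standard basis vector at 0 -/
def e0 : ℕ → ℂ := fun n => if n = 0 then 1 else 0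

section L2

lemma l2_of_sub {x y : ℕ → ℂ} (hxy : Summable fun n => ‖x n - y n‖ ^ 2)
    (hx : Summable fun n => ‖x n‖ ^ 2) : Summable fun n => ‖y n‖ ^ 2 := by
  refine Summable.of_nonneg_of_le (fun n => sq_nonneg _) (fun n => ?_)
    (((hxy.add hx)).mul_left 2)
  have h1 : ‖y n‖ ≤ ‖x n - y n‖ + ‖x n‖ := by
    have : y n = x n - (x n - y n) := by ring
    rw [this]
    simpa [norm_sub_rev, add_comm] using norm_sub_le (x n) (x n - y n)
  nlinarith [norm_nonneg (x n - y n), norm_nonneg (x n), norm_nonneg (y n),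
    sq_nonneg (‖x n - y n‖ - ‖x n‖)]

lemma l2_add {x y : ℕ → ℂ} (hx : Summable fun n => ‖x n‖ ^ 2)
    (hy : Summable fun n => ‖y n‖ ^ 2) : Summable fun n => ‖x n + y n‖ ^ 2 := by
  refine Summable.of_nonneg_of_le (fun n => sq_nonneg _) (fun n => ?_)
    ((hx.add hy).mul_left 2)
  have h1 : ‖x n + y n‖ ≤ ‖x n‖ + ‖y n‖ := norm_add_le _ _
  nlinarith [norm_nonneg (x n), norm_nonneg (y n), norm_nonneg (x n + y n),
    sq_nonneg (‖x n‖ - ‖y n‖)]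

lemma l2_smul {x : ℕ → ℂ} (c : ℂ) (hx : Summable fun n => ‖x n‖ ^ 2) :
    Summable fun n => ‖c * x n‖ ^ 2 := by
  simpa [norm_mul, mul_pow] using hx.mul_left (‖c‖ ^ 2)

lemma summable_norm_prod {x y : ℕ → ℂ} (hx : Summable fun n => ‖x n‖ ^ 2)
    (hy : Summable fun n => ‖y n‖ ^ 2) : Summable fun n => ‖x n * y n‖ := by
  refine Summable.of_nonneg_of_le (fun n => norm_nonneg _) (fun n => ?_)
    ((hx.add hy).div_const 2)
  rw [norm_mul]
  nlinarith [norm_nonneg (x n), norm_nonneg (y n), sq_nonneg (‖x n‖ - ‖y n‖)]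

lemma summable_prod {x y : ℕ → ℂ} (hx : Summable fun n => ‖x n‖ ^ 2)
    (hy : Summable fun n => ‖y n‖ ^ 2) : Summable fun n => x n * y n :=
  (summable_norm_prod hx hy).of_norm

/-- Cauchy–Schwarz for tsums. -/
lemma tsum_prod_bound {x y : ℕ → ℂ} (hx : Summable fun n => ‖x n‖ ^ 2)
    (hy : Summable fun n => ‖y n‖ ^ 2) :
    ‖∑' n, x n * y n‖ ≤ Real.sqrt (∑' n, ‖x n‖ ^ 2) * Real.sqrt (∑' n, ‖y n‖ ^ 2) := by
  refine (norm_tsum_le_tsum_norm (summable_norm_prod hx hy)).trans ?_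
  refine Summable.tsum_le_of_sum_le (summable_norm_prod hx hy) fun s => ?_
  have h1 : (∑ n ∈ s, ‖x n * y n‖) ^ 2 ≤ (∑ n ∈ s, ‖x n‖ ^ 2) * ∑ n ∈ s, ‖y n‖ ^ 2 := by
    simpa [norm_mul] using Finset.sum_mul_sq_le_sq_mul_sq s (fun n => ‖x n‖) (fun n => ‖y n‖)
  have h2 : (∑ n ∈ s, ‖x n‖ ^ 2) ≤ ∑' n, ‖x n‖ ^ 2 :=
    Summable.sum_le_tsum s (fun _ _ => sq_nonneg _) hx
  have h3 : (∑ n ∈ s, ‖y n‖ ^ 2) ≤ ∑' n, ‖y n‖ ^ 2 :=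
    Summable.sum_le_tsum s (fun _ _ => sq_nonneg _) hy
  have h4 : (∑ n ∈ s, ‖x n * y n‖) ^ 2 ≤ (∑' n, ‖x n‖ ^ 2) * ∑' n, ‖y n‖ ^ 2 := by
    refine h1.trans (mul_le_mul h2 h3 (Finset.sum_nonneg fun _ _ => sq_nonneg _)
      ((Finset.sum_nonneg fun _ _ => sq_nonneg _).trans h2))
  have h5 := Real.sqrt_le_sqrt h4
  rwa [Real.sqrt_sq (Finset.sum_nonneg fun _ _ => norm_nonneg _),
    Real.sqrt_mul (tsum_nonneg fun _ => sq_nonneg _)] at h5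

end L2
/-- `jacobiGraph a b f g` means: `f` belongs to the domain `D(T)` of the closure `T` of the
Jacobi matrix acting on the finitely supported sequences, and `T f = g`; i.e. there are
finitely supported sequences `u k → f` in `ℓ²` such that `J (u k) → g` in `ℓ²`. -/
def jacobiGraph (a b : ℕ → ℝ) (f g : ℕ → ℂ) : Prop :=
  ∃ u : ℕ → ℕ → ℂ,
    (∀ k, (Function.support (u k)).Finite) ∧
    (∀ k, Summable fun n => ‖u k n - f n‖ ^ 2) ∧
    Tendsto (fun k => ∑' n, ‖u k n - f n‖ ^ 2) atTop (𝓝 0) ∧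
    (∀ k, Summable fun n => ‖jacobiMul a b (u k) n - g n‖ ^ 2) ∧
    Tendsto (fun k => ∑' n, ‖jacobiMul a b (u k) n - g n‖ ^ 2) atTop (𝓝 0)

/-- Membership in the domain `D(T)` of the Jacobi operator. -/
def inDomT (a b : ℕ → ℝ) (f : ℕ → ℂ) : Prop := ∃ g, jacobiGraph a b f g

/-- The `ℓ²` norm of a complex sequence. -/
def l2norm (f : ℕ → ℂ) : ℝ := Real.sqrt (∑' n, ‖f n‖ ^ 2)

/-- The data of an indeterminate Hamburger moment problem: Jacobi parameters `a`, `b`,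
the orthonormal polynomials `p` and second-kind polynomials `q` (as entire functions),
determined by the three-term recurrence, together with the indeterminacy condition
`∑ₙ (|pₙ(z)|² + |qₙ(z)|²) < ∞` for all `z`. -/
structure JacobiSetup where
  a : ℕ → ℝ
  b : ℕ → ℝ
  ha : ∀ n, 0 < a n
  p : ℕ → ℂ → ℂ
  q : ℕ → ℂ → ℂ
  hp0 : ∀ z, p 0 z = 1
  hp1 : ∀ z, p 1 z = (z - (b 0 : ℂ)) / (a 0 : ℂ)
  hq0 : ∀ z, q 0 z = 0
  hq1 : ∀ z, q 1 z = 1 / (a 0 : ℂ)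
  hrecp : ∀ n z, z * p (n + 1) z =
    (a (n + 1) : ℂ) * p (n + 2) z + (b (n + 1) : ℂ) * p (n + 1) z + (a n : ℂ) * p n z
  hrecq : ∀ n z, z * q (n + 1) z =
    (a (n + 1) : ℂ) * q (n + 2) z + (b (n + 1) : ℂ) * q (n + 1) z + (a n : ℂ) * q n z
  indet : ∀ z : ℂ, Summable fun n => ‖p n z‖ ^ 2 + ‖q n z‖ ^ 2

/-- The Nevanlinna function `A(u,v)`. -/
def nevA (S : JacobiSetup) (u v : ℂ) : ℂ := (u - v) * ∑' k, S.q k u * S.q k v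
/-- The Nevanlinna function `B(u,v)`. -/
def nevB (S : JacobiSetup) (u v : ℂ) : ℂ := -1 + (u - v) * ∑' k, S.p k u * S.q k v
/-- The Nevanlinna function `C(u,v)`. -/
def nevC (S : JacobiSetup) (u v : ℂ) : ℂ := 1 + (u - v) * ∑' k, S.q k u * S.p k v
/-- The Nevanlinna function `D(u,v)`. -/
def nevD (S : JacobiSetup) (u v : ℂ) : ℂ := (u - v) * ∑' k, S.p k u * S.p k v

section Green

lemma jacobiMul_comb (a b : ℕ → ℝ) (x y : ℕ → ℂ) (c : ℂ) (n : ℕ) :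
    jacobiMul a b (fun m => x m + c * y m) n = jacobiMul a b x n + c * jacobiMul a b y n := by
  cases n <;> simp [jacobiMul] <;> ring

/-- Green / Lagrange summation identity. -/
lemma green (a b : ℕ → ℝ) (x y : ℕ → ℂ) (N : ℕ) :
    ∑ n ∈ Finset.range (N + 1),
      (jacobiMul a b x n * y n - x n * jacobiMul a b y n)
      = (a N : ℂ) * (x (N + 1) * y N - x N * y (N + 1)) := by
  induction N with
  | zero => simp [jacobiMul]; ring
  | succ N ih =>
      rw [Finset.sum_range_succ, ih]
      show _ + (jacobiMul a b x (N+1) * y (N+1) - x (N+1) * jacobiMul a b y (N+1)) = _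
      simp only [jacobiMul]
      ring

end Green
section Setup

variable (S : JacobiSetup)

lemma sqp (z : ℂ) : Summable fun n => ‖S.p n z‖ ^ 2 :=
  Summable.of_nonneg_of_le (fun _ => sq_nonneg _)
    (fun n => le_add_of_nonneg_right (sq_nonneg _)) (S.indet z)

lemma sqq (z : ℂ) : Summable fun n => ‖S.q n z‖ ^ 2 :=
  Summable.of_nonneg_of_le (fun _ => sq_nonneg _)
    (fun n => le_add_of_nonneg_left (sq_nonneg _)) (S.indet z)

lemma a_ne (n : ℕ) : (S.a n : ℂ) ≠ 0 :=
  Complex.ofReal_ne_zero.mpr (ne_of_gt (S.ha n))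

lemma jac_p (z : ℂ) (n : ℕ) :
    jacobiMul S.a S.b (fun m => S.p m z) n = z * S.p n z := by
  cases n with
  | zero =>
      simp only [jacobiMul, S.hp0, S.hp1]
      rw [mul_div_assoc', mul_div_cancel_left₀ _ (a_ne S 0)]
      ring
  | succ n =>
      simp only [jacobiMul]
      linear_combination (S.hrecp n z).symm

lemma jac_q (z : ℂ) (n : ℕ) :
    jacobiMul S.a S.b (fun m => S.q m z) n = z * S.q n z + e0 n := by
  cases n with
  | zero =>
      simp only [jacobiMul, S.hq0, S.hq1, e0, if_pos rfl]
      rw [mul_one_div, div_self (a_ne S 0)]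
      simp [S.hq0]
  | succ n =>
      simp only [jacobiMul, e0, Nat.succ_ne_zero, if_false]
      linear_combination (S.hrecq n z).symm

/-- Summand identity used for the `q,q` Wronskian. -/
lemma summand_qq (z w : ℂ) (n : ℕ) :
    jacobiMul S.a S.b (fun m => S.q m z) n * S.q n w
      - S.q n z * jacobiMul S.a S.b (fun m => S.q m w) n
      = (z - w) * (S.q n z * S.q n w) := by
  rw [jac_q, jac_q]
  cases n with
  | zero => simp [S.hq0]
  | succ n => simp [e0]; ring

/-- Summand identity for the `q,p` Wronskian. -/
lemma summand_qp (z w : ℂ) (n : ℕ) :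
    jacobiMul S.a S.b (fun m => S.q m z) n * S.p n w
      - S.q n z * jacobiMul S.a S.b (fun m => S.p m w) n
      = (z - w) * (S.q n z * S.p n w) + (if n = 0 then 1 else 0) := by
  rw [jac_q, jac_p]
  cases n with
  | zero => simp [S.hq0, S.hp0, e0]
  | succ n => simp [e0]; ring

/-- Wronskian-type identity for `q_u, q_v`. -/
lemma wronskian_qq (z w : ℂ) (N : ℕ) :
    (S.a N : ℂ) * (S.q (N + 1) z * S.q N w - S.q N z * S.q (N + 1) w)
      = (z - w) * ∑ n ∈ Finset.range (N + 1), S.q n z * S.q n w := by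
  rw [← green S.a S.b (fun m => S.q m z) (fun m => S.q m w) N]
  rw [Finset.mul_sum]
  exact Finset.sum_congr rfl fun n _ => summand_qq S z w n

/-- Wronskian-type identity for `q_u, p_v`. -/
lemma wronskian_qp (z w : ℂ) (N : ℕ) :
    (S.a N : ℂ) * (S.q (N + 1) z * S.p N w - S.q N z * S.p (N + 1) w)
      = 1 + (z - w) * ∑ n ∈ Finset.range (N + 1), S.q n z * S.p n w := by
  rw [← green S.a S.b (fun m => S.q m z) (fun m => S.p m w) N]
  have : ∀ n ∈ Finset.range (N + 1),
      jacobiMul S.a S.b (fun m => S.q m z) n * S.p n w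
        - S.q n z * jacobiMul S.a S.b (fun m => S.p m w) n
      = (z - w) * (S.q n z * S.p n w) + (if n = 0 then 1 else 0) :=
    fun n _ => summand_qp S z w n
  rw [Finset.sum_congr rfl this, Finset.sum_add_distrib, ← Finset.mul_sum,
    Finset.sum_ite_eq' (Finset.range (N + 1)) 0 (fun _ => (1 : ℂ))]
  simp [Finset.mem_range]
  ring

/-- Constant Wronskian: `a_N (q_{N+1} p_N - q_N p_{N+1}) = 1` at equal arguments. -/
lemma wron_const (z : ℂ) (N : ℕ) :
    (S.a N : ℂ) * (S.q (N + 1) z * S.p N z - S.q N z * S.p (N + 1) z) = 1 := by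
  rw [wronskian_qp]
  simp

end Setup
section Forward

lemma finsupp_bound {x : ℕ → ℂ} (h : (Function.support x).Finite) :
    ∃ M, ∀ n, M ≤ n → x n = 0 := by
  obtain ⟨M, hM⟩ := h.bddAbove
  refine ⟨M + 1, fun n hn => ?_⟩
  by_contra hx
  have := hM (Function.mem_support.mpr hx)
  omega

lemma summable_sq_of_bound {x : ℕ → ℂ} (M : ℕ) (h : ∀ n, M ≤ n → x n = 0) :
    Summable fun n => ‖x n‖ ^ 2 := by
  refine summable_of_ne_finset_zero (s := Finset.range M) fun n hn => ?_
  rw [h n (by simpa using hn)]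
  simp

lemma jacobiMul_bound (a b : ℕ → ℝ) {x : ℕ → ℂ} (M : ℕ) (h : ∀ n, M ≤ n → x n = 0) :
    ∀ n, M + 2 ≤ n → jacobiMul a b x n = 0 := by
  intro n hn
  match n, hn with
  | (m + 1), hn =>
      show (a m : ℂ) * x m + (b (m+1) : ℂ) * x (m+1) + (a (m+1) : ℂ) * x (m+2) = 0
      rw [h m (by omega), h (m+1) (by omega), h (m+2) (by omega)]
      ring

lemma ptwise {x : ℕ → ℕ → ℂ} {f : ℕ → ℂ}
    (hs : ∀ k, Summable fun n => ‖x k n - f n‖ ^ 2)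
    (hl : Tendsto (fun k => ∑' n, ‖x k n - f n‖ ^ 2) atTop (𝓝 0)) (n : ℕ) :
    Tendsto (fun k => x k n) atTop (𝓝 (f n)) := by
  have h1 : Tendsto (fun k => ‖x k n - f n‖ ^ 2) atTop (𝓝 0) := by
    refine squeeze_zero (fun k => sq_nonneg _) (fun k => ?_) hl
    exact Summable.le_tsum (hs k) n fun m _ => sq_nonneg _
  have h2 : Tendsto (fun k => ‖x k n - f n‖) atTop (𝓝 0) := by
    have h3 := (Real.continuous_sqrt.tendsto 0).comp h1
    have he : (fun k => ‖x k n - f n‖) = (Real.sqrt ∘ fun k => ‖x k n - f n‖ ^ 2) := by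
      funext k
      simp only [Function.comp_apply]
      rw [Real.sqrt_sq (norm_nonneg _)]
    rw [he]
    simpa using h3
  have := tendsto_iff_norm_sub_tendsto_zero.mpr h2
  exact this

lemma pairing_tendsto {x : ℕ → ℕ → ℂ} {f y : ℕ → ℂ}
    (hx : ∀ k, Summable fun n => ‖x k n - f n‖ ^ 2)
    (hl : Tendsto (fun k => ∑' n, ‖x k n - f n‖ ^ 2) atTop (𝓝 0))
    (hf : Summable fun n => ‖f n‖ ^ 2) (hy : Summable fun n => ‖y n‖ ^ 2)
    (hxk : ∀ k, Summable fun n => ‖x k n‖ ^ 2) :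
    Tendsto (fun k => ∑' n, x k n * y n) atTop (𝓝 (∑' n, f n * y n)) := by
  have hd : ∀ k, Summable fun n => ‖x k n - f n‖ ^ 2 := hx
  have key : ∀ k, (∑' n, x k n * y n) - ∑' n, f n * y n = ∑' n, (x k n - f n) * y n := by
    intro k
    rw [← Summable.tsum_sub (summable_prod (hxk k) hy) (summable_prod hf hy)]
    exact tsum_congr fun n => by ring
  rw [← tendsto_sub_nhds_zero_iff]
  have hb : ∀ k, ‖(∑' n, x k n * y n) - ∑' n, f n * y n‖
      ≤ Real.sqrt (∑' n, ‖x k n - f n‖ ^ 2) * Real.sqrt (∑' n, ‖y n‖ ^ 2) := by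
    intro k
    rw [key k]
    exact tsum_prod_bound (hd k) hy
  refine squeeze_zero_norm hb ?_
  have h1 : Tendsto (fun k => Real.sqrt (∑' n, ‖x k n - f n‖ ^ 2)) atTop (𝓝 0) := by
    have := (Real.continuous_sqrt.tendsto 0).comp hl
    simpa [Function.comp_def] using this
  simpa using h1.mul_const (Real.sqrt (∑' n, ‖y n‖ ^ 2))

lemma finsupp_sym (a b : ℕ → ℝ) (x y : ℕ → ℂ) (M : ℕ) (hx : ∀ n, M ≤ n → x n = 0) :
    ∑' n, jacobiMul a b x n * y n = ∑' n, x n * jacobiMul a b y n := by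
  have hJx := jacobiMul_bound a b M hx
  rw [tsum_eq_sum (s := Finset.range (M + 2))
      (fun n hn => by rw [hJx n (by simpa using hn)]; ring),
    tsum_eq_sum (s := Finset.range (M + 2))
      (fun n hn => by rw [hx n (by simp at hn; omega)]; ring)]
  have hG := green a b x y (M + 1)
  rw [hx (M + 1) (by omega), hx (M + 2) (by omega)] at hG
  simp only [mul_zero, zero_mul, sub_zero, zero_sub, mul_neg, neg_zero] at hG
  have h0 : ∑ n ∈ Finset.range (M + 2), (jacobiMul a b x n * y n - x n * jacobiMul a b y n)
      = 0 := by simpa using hG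
  rw [Finset.sum_sub_distrib] at h0
  exact sub_eq_zero.mp h0
lemma summable_e0_mul (y : ℕ → ℂ) : Summable fun n => e0 n * y n := by
  refine summable_of_ne_finset_zero (s := {0}) fun n hn => ?_
  simp only [Finset.mem_singleton] at hn
  simp [e0, hn]

lemma tsum_e0_mul (y : ℕ → ℂ) : ∑' n, e0 n * y n = y 0 := by
  rw [tsum_eq_single 0 (fun n hn => by simp [e0, hn])]
  simp [e0]

lemma tsum_three {x y z : ℕ → ℂ} (hx : Summable x) (hy : Summable y) (hz : Summable z) :
    ∑' n, (x n + y n + z n) = (∑' n, x n) + (∑' n, y n) + ∑' n, z n := by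
  rw [Summable.tsum_add (hx.add hy) hz, Summable.tsum_add hx hy]

lemma forward (S : JacobiSetup) (u v β : ℂ)
    (h : inDomT S.a S.b fun n => S.q n u + β * S.q n v) :
    nevA S u v = 0 ∧ β = -nevC S u v := by
  obtain ⟨g, w, hfin, hs1, hl1, hs2, hl2⟩ := h
  have hfl2 : Summable fun n => ‖S.q n u + β * S.q n v‖ ^ 2 :=
    l2_add (sqq S u) (l2_smul β (sqq S v))
  have hbound : ∀ k, ∃ M, ∀ n, M ≤ n → w k n = 0 := fun k => finsupp_bound (hfin k)
  have hwk2 : ∀ k, Summable fun n => ‖w k n‖ ^ 2 := fun k =>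
    (hbound k).elim fun M hM => summable_sq_of_bound M hM
  have hJwk2 : ∀ k, Summable fun n => ‖jacobiMul S.a S.b (w k) n‖ ^ 2 := fun k =>
    (hbound k).elim fun M hM => summable_sq_of_bound (M + 2) (jacobiMul_bound S.a S.b M hM)
  have hgl2 : Summable fun n => ‖g n‖ ^ 2 := l2_of_sub (hs2 0) (hJwk2 0)
  -- g = J f pointwise
  have hJf : ∀ n, jacobiMul S.a S.b (fun m => S.q m u + β * S.q m v) n
      = u * S.q n u + β * (v * S.q n v) + (1 + β) * e0 n := by
    intro n
    rw [jacobiMul_comb S.a S.b (fun m => S.q m u) (fun m => S.q m v) β n,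
      jac_q, jac_q]
    ring
  have hgn : ∀ n, g n = u * S.q n u + β * (v * S.q n v) + (1 + β) * e0 n := by
    intro n
    have h1 : Tendsto (fun k => jacobiMul S.a S.b (w k) n) atTop (𝓝 (g n)) :=
      ptwise hs2 hl2 n
    have hptw := ptwise hs1 hl1
    have h2 : Tendsto (fun k => jacobiMul S.a S.b (w k) n) atTop
        (𝓝 (jacobiMul S.a S.b (fun m => S.q m u + β * S.q m v) n)) := by
      cases n with
      | zero =>
          simp only [jacobiMul]
          exact ((hptw 0).const_mul _).add ((hptw 1).const_mul _)
      | succ m =>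
          simp only [jacobiMul]
          exact (((hptw m).const_mul _).add ((hptw (m+1)).const_mul _)).add
            ((hptw (m+2)).const_mul _)
    rw [← hJf n]
    exact tendsto_nhds_unique h1 h2
  -- the key pairing identity
  have key : ∀ y : ℕ → ℂ, (Summable fun n => ‖y n‖ ^ 2) →
      (Summable fun n => ‖jacobiMul S.a S.b y n‖ ^ 2) →
      ∑' n, g n * y n = ∑' n, (S.q n u + β * S.q n v) * jacobiMul S.a S.b y n := by
    intro y hy hJy
    have e1 : ∀ k, (∑' n, jacobiMul S.a S.b (w k) n * y n)
        = ∑' n, w k n * jacobiMul S.a S.b y n := by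
      intro k
      obtain ⟨M, hM⟩ := hbound k
      exact finsupp_sym S.a S.b (w k) y M hM
    have t1 : Tendsto (fun k => ∑' n, jacobiMul S.a S.b (w k) n * y n) atTop
        (𝓝 (∑' n, g n * y n)) := pairing_tendsto hs2 hl2 hgl2 hy hJwk2
    have t2 : Tendsto (fun k => ∑' n, w k n * jacobiMul S.a S.b y n) atTop
        (𝓝 (∑' n, (S.q n u + β * S.q n v) * jacobiMul S.a S.b y n)) :=
      pairing_tendsto hs1 hl1 hfl2 hJy hwk2
    exact tendsto_nhds_unique (by simpa only [e1] using t1) t2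
  -- summable products
  have SQP : Summable fun n => S.q n u * S.p n v := summable_prod (sqq S u) (sqp S v)
  have SQPv : Summable fun n => S.q n v * S.p n v := summable_prod (sqq S v) (sqp S v)
  have SQQ : Summable fun n => S.q n u * S.q n v := summable_prod (sqq S u) (sqq S v)
  have SQQv : Summable fun n => S.q n v * S.q n v := summable_prod (sqq S v) (sqq S v)
  -- Equation 1 : test against p_v
  have hyJ1 : (jacobiMul S.a S.b fun m => S.p m v) = fun n => v * S.p n v :=
    funext (jac_p S v)
  have E1 := key (fun m => S.p m v) (sqp S v) (by rw [hyJ1]; exact l2_smul v (sqp S v))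
  rw [hyJ1] at E1
  have eL1 : ∑' n, g n * S.p n v
      = u * (∑' n, S.q n u * S.p n v) + (β * v) * (∑' n, S.q n v * S.p n v) + (1 + β) := by
    have hcg : ∀ n, g n * S.p n v
        = u * (S.q n u * S.p n v) + (β * v) * (S.q n v * S.p n v)
          + (1 + β) * (e0 n * S.p n v) := fun n => by rw [hgn n]; ring
    rw [tsum_congr hcg,
      tsum_three (SQP.mul_left u) (SQPv.mul_left (β * v))
        ((summable_e0_mul _).mul_left (1 + β)),
      tsum_mul_left, tsum_mul_left, tsum_mul_left, tsum_e0_mul, S.hp0]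
    ring
  have eR1 : ∑' n, (S.q n u + β * S.q n v) * (v * S.p n v)
      = v * (∑' n, S.q n u * S.p n v) + (β * v) * (∑' n, S.q n v * S.p n v) := by
    have hcg : ∀ n, (S.q n u + β * S.q n v) * (v * S.p n v)
        = v * (S.q n u * S.p n v) + (β * v) * (S.q n v * S.p n v) := fun n => by ring
    rw [tsum_congr hcg, Summable.tsum_add (SQP.mul_left v) (SQPv.mul_left (β * v)),
      tsum_mul_left, tsum_mul_left]
  rw [eL1, eR1] at E1
  -- Equation 2 : test against q_v
  have hyJ2 : (jacobiMul S.a S.b fun m => S.q m v) = fun n => v * S.q n v + e0 n :=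
    funext (jac_q S v)
  have he02 : Summable fun n => ‖e0 n‖ ^ 2 :=
    summable_sq_of_bound 1 (fun n hn => by simp [e0]; omega)
  have E2 := key (fun m => S.q m v) (sqq S v)
    (by rw [hyJ2]; exact l2_add (l2_smul v (sqq S v)) he02)
  rw [hyJ2] at E2
  have eL2 : ∑' n, g n * S.q n v
      = u * (∑' n, S.q n u * S.q n v) + (β * v) * (∑' n, S.q n v * S.q n v) := by
    have hcg : ∀ n, g n * S.q n v
        = u * (S.q n u * S.q n v) + (β * v) * (S.q n v * S.q n v)
          + (1 + β) * (e0 n * S.q n v) := fun n => by rw [hgn n]; ring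
    rw [tsum_congr hcg,
      tsum_three (SQQ.mul_left u) (SQQv.mul_left (β * v))
        ((summable_e0_mul _).mul_left (1 + β)),
      tsum_mul_left, tsum_mul_left, tsum_mul_left, tsum_e0_mul, S.hq0]
    ring
  have eR2 : ∑' n, (S.q n u + β * S.q n v) * (v * S.q n v + e0 n)
      = v * (∑' n, S.q n u * S.q n v) + (β * v) * (∑' n, S.q n v * S.q n v) := by
    have hcg : ∀ n, (S.q n u + β * S.q n v) * (v * S.q n v + e0 n)
        = v * (S.q n u * S.q n v) + (β * v) * (S.q n v * S.q n v)
          + e0 n * (S.q n u + β * S.q n v) := fun n => by ring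
    rw [tsum_congr hcg,
      tsum_three (SQQ.mul_left v) (SQQv.mul_left (β * v)) (summable_e0_mul _),
      tsum_mul_left, tsum_mul_left, tsum_e0_mul, S.hq0, S.hq0]
    ring
  rw [eL2, eR2] at E2
  constructor
  · rw [nevA]
    linear_combination E2
  · rw [nevC]
    linear_combination E1
section Approx

lemma tail_summable {x : ℕ → ℝ} (hx : Summable x) (hnn : ∀ n, 0 ≤ x n) (N : ℕ) :
    Summable fun n => if n ≤ N then 0 else x n :=
  Summable.of_nonneg_of_le (fun n => by by_cases h : n ≤ N <;> simp [h, hnn n])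
    (fun n => by by_cases h : n ≤ N <;> simp [h, hnn n]) hx

lemma tail_tendsto {x : ℕ → ℝ} (hx : Summable x) (hnn : ∀ n, 0 ≤ x n) :
    Tendsto (fun N : ℕ => ∑' n, if n ≤ N then 0 else x n) atTop (𝓝 0) := by
  have hsplit : ∀ N : ℕ, (∑' n, if n ≤ N then 0 else x n)
      = (∑' n, x n) - ∑ n ∈ Finset.range (N + 1), x n := by
    intro N
    have hs1 : Summable fun n => if n ≤ N then x n else 0 :=
      summable_of_ne_finset_zero (s := Finset.range (N + 1))
        (fun n hn => by rw [if_neg (by simp at hn; omega)])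
    have h1 : (∑' n, x n)
        = (∑' n, if n ≤ N then x n else 0) + ∑' n, if n ≤ N then 0 else x n := by
      rw [← Summable.tsum_add hs1 (tail_summable hx hnn N)]
      exact tsum_congr fun n => by by_cases h : n ≤ N <;> simp [h]
    have h2 : (∑' n, if n ≤ N then x n else 0) = ∑ n ∈ Finset.range (N + 1), x n := by
      rw [tsum_eq_sum (s := Finset.range (N + 1))
        (fun n hn => by rw [if_neg (by simp at hn; omega)])]
      exact Finset.sum_congr rfl fun n hn => by rw [if_pos (by simp at hn; omega)]
    rw [h1, h2]; ring
  have h3 : Tendsto (fun N : ℕ => (∑' n, x n) - ∑ n ∈ Finset.range (N + 1), x n)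
      atTop (𝓝 ((∑' n, x n) - ∑' n, x n)) :=
    (tendsto_const_nhds (x := ∑' n, x n)).sub
      (hx.hasSum.tendsto_sum_nat.comp (tendsto_add_atTop_nat 1))
  simp only [sub_self] at h3
  exact Tendsto.congr (fun N => (hsplit N).symm) h3

lemma approx_helper {c₁ c₂ t : ℕ → ℂ} (hc₁ : Summable fun n => ‖c₁ n‖ ^ 2)
    (hc₂ : Summable fun n => ‖c₂ n‖ ^ 2) (ht : Summable fun n => ‖t n‖ ^ 2)
    {μ ν : ℕ → ℂ} (hμ : Tendsto μ atTop (𝓝 0)) (hν : Tendsto ν atTop (𝓝 0)) :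
    (∀ N, Summable fun n =>
        ‖(if n ≤ N then t n + μ N * c₁ n + ν N * c₂ n else 0) - t n‖ ^ 2) ∧
      Tendsto (fun N => ∑' n,
          ‖(if n ≤ N then t n + μ N * c₁ n + ν N * c₂ n else 0) - t n‖ ^ 2)
        atTop (𝓝 0) := by
  have hbd : ∀ N n, ‖(if n ≤ N then t n + μ N * c₁ n + ν N * c₂ n else 0) - t n‖ ^ 2
      ≤ 3 * (‖μ N‖ ^ 2 * ‖c₁ n‖ ^ 2) + 3 * (‖ν N‖ ^ 2 * ‖c₂ n‖ ^ 2)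
        + 3 * (if n ≤ N then 0 else ‖t n‖ ^ 2) := by
    intro N n
    by_cases h : n ≤ N
    · rw [if_pos h, if_pos h]
      have he : t n + μ N * c₁ n + ν N * c₂ n - t n = μ N * c₁ n + ν N * c₂ n := by ring
      rw [he]
      have h1 : ‖μ N * c₁ n + ν N * c₂ n‖ ≤ ‖μ N‖ * ‖c₁ n‖ + ‖ν N‖ * ‖c₂ n‖ := by
        refine (norm_add_le _ _).trans ?_
        rw [norm_mul, norm_mul]
      have h2 := norm_nonneg (μ N * c₁ n + ν N * c₂ n)
      nlinarith [sq_nonneg (‖μ N‖ * ‖c₁ n‖ - ‖ν N‖ * ‖c₂ n‖), sq_nonneg ‖t n‖,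
        mul_nonneg (mul_nonneg (norm_nonneg (μ N)) (norm_nonneg (c₁ n)))
          (mul_nonneg (norm_nonneg (ν N)) (norm_nonneg (c₂ n))),
        sq_nonneg (‖μ N‖ * ‖c₁ n‖ + ‖ν N‖ * ‖c₂ n‖)]
    · rw [if_neg h, if_neg h]
      have he : (0 : ℂ) - t n = -t n := by ring
      rw [he, norm_neg]
      nlinarith [sq_nonneg (‖μ N‖ * ‖c₁ n‖), sq_nonneg (‖ν N‖ * ‖c₂ n‖), sq_nonneg ‖t n‖,
        mul_pow (‖μ N‖) (‖c₁ n‖) 2, mul_pow (‖ν N‖) (‖c₂ n‖) 2]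
  have hBsum : ∀ N, Summable fun n =>
      3 * (‖μ N‖ ^ 2 * ‖c₁ n‖ ^ 2) + 3 * (‖ν N‖ ^ 2 * ‖c₂ n‖ ^ 2)
        + 3 * (if n ≤ N then 0 else ‖t n‖ ^ 2) := fun N =>
    (((hc₁.mul_left _).mul_left 3).add ((hc₂.mul_left _).mul_left 3)).add
      ((tail_summable ht (fun n => sq_nonneg _) N).mul_left 3)
  refine ⟨fun N => Summable.of_nonneg_of_le (fun n => sq_nonneg _) (hbd N) (hBsum N), ?_⟩
  refine squeeze_zero (fun N => tsum_nonneg fun n => sq_nonneg _)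
    (fun N => Summable.tsum_le_tsum (hbd N)
      (Summable.of_nonneg_of_le (fun n => sq_nonneg _) (hbd N) (hBsum N)) (hBsum N)) ?_
  have ht1 : ∀ N, (∑' n, (3 * (‖μ N‖ ^ 2 * ‖c₁ n‖ ^ 2) + 3 * (‖ν N‖ ^ 2 * ‖c₂ n‖ ^ 2)
      + 3 * (if n ≤ N then 0 else ‖t n‖ ^ 2)))
      = 3 * ‖μ N‖ ^ 2 * (∑' n, ‖c₁ n‖ ^ 2) + 3 * ‖ν N‖ ^ 2 * (∑' n, ‖c₂ n‖ ^ 2)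
        + 3 * ∑' n, (if n ≤ N then 0 else ‖t n‖ ^ 2) := by
    intro N
    rw [Summable.tsum_add (((hc₁.mul_left _).mul_left 3).add ((hc₂.mul_left _).mul_left 3))
        ((tail_summable ht (fun n => sq_nonneg _) N).mul_left 3),
      Summable.tsum_add ((hc₁.mul_left _).mul_left 3) ((hc₂.mul_left _).mul_left 3),
      tsum_mul_left, tsum_mul_left, tsum_mul_left, tsum_mul_left, tsum_mul_left]
    ring
  have l1 : Tendsto (fun N => ‖μ N‖ ^ 2) atTop (𝓝 0) := by
    have := (hμ.norm).pow 2
    simpa using this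
  have l2 : Tendsto (fun N => ‖ν N‖ ^ 2) atTop (𝓝 0) := by
    have := (hν.norm).pow 2
    simpa using this
  have lfinal : Tendsto (fun N => 3 * ‖μ N‖ ^ 2 * (∑' n, ‖c₁ n‖ ^ 2)
      + 3 * ‖ν N‖ ^ 2 * (∑' n, ‖c₂ n‖ ^ 2)
      + 3 * ∑' n, (if n ≤ N then 0 else ‖t n‖ ^ 2)) atTop (𝓝 0) := by
    have A1 := (l1.const_mul (3 : ℝ)).mul_const (∑' n, ‖c₁ n‖ ^ 2)
    have A2 := (l2.const_mul (3 : ℝ)).mul_const (∑' n, ‖c₂ n‖ ^ 2)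
    have A3 := (tail_tendsto ht fun n => sq_nonneg _).const_mul (3 : ℝ)
    have := (A1.add A2).add A3
    simpa [mul_assoc] using this
  exact Tendsto.congr (fun N => (ht1 N).symm) lfinal

end Approx
lemma e0_sq_summable : Summable fun n => ‖e0 n‖ ^ 2 :=
  summable_sq_of_bound 1 (fun n hn => by simp [e0]; omega)

lemma converse (S : JacobiSetup) (u v : ℂ) (hA : nevA S u v = 0) :
    inDomT S.a S.b fun n => S.q n u + (-nevC S u v) * S.q n v := by
  set β : ℂ := -nevC S u v with hβ
  set f : ℕ → ℂ := fun n => S.q n u + β * S.q n v with hf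
  set μ : ℕ → ℂ := fun N => (S.a N : ℂ) * (f (N + 1) * S.q N v - f N * S.q (N + 1) v)
    with hμdef
  set ν : ℕ → ℂ := fun N => (S.a N : ℂ) * (f N * S.p (N + 1) v - f (N + 1) * S.p N v)
    with hνdef
  -- limits of the correction coefficients
  have hμeq : ∀ N, μ N = (u - v) * ∑ n ∈ Finset.range (N + 1), S.q n u * S.q n v := by
    intro N
    have hw := wronskian_qq S u v N
    simp only [hμdef, hf]
    linear_combination hw
  have hνeq : ∀ N, ν N
      = -(1 + (u - v) * ∑ n ∈ Finset.range (N + 1), S.q n u * S.p n v) - β := by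
    intro N
    have hw := wronskian_qp S u v N
    have hw2 := wron_const S v N
    simp only [hνdef, hf]
    linear_combination -hw - β * hw2
  have hμ : Tendsto μ atTop (𝓝 0) := by
    have hpart : Tendsto (fun N => ∑ n ∈ Finset.range (N + 1), S.q n u * S.q n v) atTop
        (𝓝 (∑' n, S.q n u * S.q n v)) :=
      (summable_prod (sqq S u) (sqq S v)).hasSum.tendsto_sum_nat.comp
        (tendsto_add_atTop_nat 1)
    have h2 := hpart.const_mul (u - v)
    have h3 : (u - v) * ∑' n, S.q n u * S.q n v = 0 := hA
    rw [h3] at h2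
    exact Tendsto.congr (fun N => (hμeq N).symm) h2
  have hν : Tendsto ν atTop (𝓝 0) := by
    have hpart : Tendsto (fun N => ∑ n ∈ Finset.range (N + 1), S.q n u * S.p n v) atTop
        (𝓝 (∑' n, S.q n u * S.p n v)) :=
      (summable_prod (sqq S u) (sqp S v)).hasSum.tendsto_sum_nat.comp
        (tendsto_add_atTop_nat 1)
    have h2 := (((hpart.const_mul (u - v)).const_add 1).neg).sub_const β
    have h3 : -(1 + (u - v) * ∑' n, S.q n u * S.p n v) - β = 0 := by
      rw [hβ, nevC]; ring
    rw [h3] at h2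
    exact Tendsto.congr (fun N => (hνeq N).symm) h2
  -- f and g = J f
  have hfl2 : Summable fun n => ‖f n‖ ^ 2 := l2_add (sqq S u) (l2_smul β (sqq S v))
  set g : ℕ → ℂ := fun n => jacobiMul S.a S.b f n with hg
  have hgn : ∀ n, g n = u * S.q n u + β * (v * S.q n v) + (1 + β) * e0 n := by
    intro n
    show jacobiMul S.a S.b (fun m => S.q m u + β * S.q m v) n = _
    rw [jacobiMul_comb S.a S.b (fun m => S.q m u) (fun m => S.q m v) β n, jac_q, jac_q]
    ring
  have hgl2 : Summable fun n => ‖g n‖ ^ 2 := by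
    refine Summable.congr (f := fun n => ‖u * S.q n u + β * (v * S.q n v) + (1 + β) * e0 n‖ ^ 2)
      ?_ fun n => by rw [hgn n]
    exact l2_add (l2_add (l2_smul u (sqq S u)) (l2_smul β (l2_smul v (sqq S v))))
      (l2_smul (1 + β) e0_sq_summable)
  -- vanishing of the corrected truncation at N and N+1
  have hz1 : ∀ N, f N + μ N * S.p N v + ν N * S.q N v = 0 := by
    intro N
    have hw := wron_const S v N
    simp only [hμdef, hνdef, hf]
    linear_combination (-(S.q N u + β * S.q N v)) * hw
  have hz2 : ∀ N, f (N + 1) + μ N * S.p (N + 1) v + ν N * S.q (N + 1) v = 0 := by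
    intro N
    have hw := wron_const S v N
    simp only [hμdef, hνdef, hf]
    linear_combination (-(S.q (N + 1) u + β * S.q (N + 1) v)) * hw
  -- the approximating sequences
  set w : ℕ → ℕ → ℂ := fun N n =>
    if n ≤ N then f n + μ N * S.p n v + ν N * S.q n v else 0 with hwdef
  have hwn : ∀ N m, w N m = if m ≤ N then f m + μ N * S.p m v + ν N * S.q m v else 0 :=
    fun N m => rfl
  have hJset : ∀ N n, jacobiMul S.a S.b (fun m => f m + μ N * S.p m v + ν N * S.q m v) n
      = g n + μ N * (v * S.p n v) + ν N * (v * S.q n v + e0 n) := by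
    intro N n
    rw [jacobiMul_comb S.a S.b (fun m => f m + μ N * S.p m v) (fun m => S.q m v) (ν N) n,
      jacobiMul_comb S.a S.b f (fun m => S.p m v) (μ N) n, jac_p, jac_q]
  have hJw : ∀ N n, jacobiMul S.a S.b (w N) n
      = if n ≤ N then g n + μ N * (v * S.p n v) + ν N * (v * S.q n v + e0 n) else 0 := by
    intro N n
    rcases Nat.lt_or_ge N n with hcase | hcase
    · rw [if_neg (by omega)]
      rcases n with _ | m
      · omega
      · show (S.a m : ℂ) * w N m + (S.b (m + 1) : ℂ) * w N (m + 1)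
            + (S.a (m + 1) : ℂ) * w N (m + 2) = 0
        have h1 : w N (m + 1) = 0 := by rw [hwn, if_neg (by omega)]
        have h2 : w N (m + 2) = 0 := by rw [hwn, if_neg (by omega)]
        have h3 : w N m = 0 := by
          rw [hwn]
          by_cases hm : m ≤ N
          · rw [if_pos hm]
            have hmN : m = N := by omega
            rw [hmN]
            exact hz1 N
          · rw [if_neg hm]
        rw [h1, h2, h3]
        ring
    · rw [if_pos hcase, ← hJset N n]
      rcases n with _ | m
      · simp only [jacobiMul]
        have h0 : w N 0 = f 0 + μ N * S.p 0 v + ν N * S.q 0 v := by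
          rw [hwn, if_pos (by omega)]
        have h1 : w N 1 = f 1 + μ N * S.p 1 v + ν N * S.q 1 v := by
          rw [hwn]
          by_cases h : 1 ≤ N
          · rw [if_pos h]
          · rw [if_neg h]
            have hN0 : N = 0 := by omega
            rw [hN0]
            exact (hz2 0).symm
        rw [h0, h1]
      · simp only [jacobiMul]
        have hm0 : w N m = f m + μ N * S.p m v + ν N * S.q m v := by
          rw [hwn, if_pos (by omega)]
        have hm1 : w N (m + 1) = f (m + 1) + μ N * S.p (m + 1) v + ν N * S.q (m + 1) v := by
          rw [hwn, if_pos (by omega)]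
        have hm2 : w N (m + 2) = f (m + 2) + μ N * S.p (m + 2) v + ν N * S.q (m + 2) v := by
          rw [hwn]
          by_cases h : m + 2 ≤ N
          · rw [if_pos h]
          · rw [if_neg h]
            have hN : N = m + 1 := by omega
            rw [hN]
            exact (hz2 (m + 1)).symm
        rw [hm0, hm1, hm2]
  -- the helper applications
  have H1 := approx_helper (sqp S v) (sqq S v) hfl2 hμ hν
  have H2 := approx_helper (l2_smul v (sqp S v))
    (l2_add (l2_smul v (sqq S v)) e0_sq_summable) hgl2 hμ hν
  refine ⟨g, w, ?_, ?_, ?_, ?_, ?_⟩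
  · intro N
    refine Set.Finite.subset (Finset.range (N + 1) : Finset ℕ).finite_toSet fun n hn => ?_
    simp only [Function.mem_support] at hn
    by_contra hmem
    simp only [Finset.coe_range, Set.mem_Iio, not_lt] at hmem
    exact hn (by rw [hwn, if_neg (by omega)])
  · exact fun N => Summable.congr (H1.1 N) fun n => by rw [hwn]
  · refine Tendsto.congr (fun N => ?_) H1.2
    exact tsum_congr fun n => by rw [hwn]
  · exact fun N => Summable.congr (H2.1 N) fun n => by rw [hJw]
  · refine Tendsto.congr (fun N => ?_) H2.2
    exact tsum_congr fun n => by rw [hJw]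
/-- There exists `β` with `𝔮_u + β 𝔮_v ∈ D(T)` iff `A(u,v) = 0`, and in the affirmative
case `β` is unique and equals `−C(u,v)`. -/
theorem stmt2 (S : JacobiSetup) (u v : ℂ) :
    ((∃ β : ℂ, inDomT S.a S.b fun n => S.q n u + β * S.q n v) ↔ nevA S u v = 0) ∧
    ∀ β : ℂ, (inDomT S.a S.b fun n => S.q n u + β * S.q n v) → β = -nevC S u v := by
  refine ⟨⟨fun ⟨β, hβ⟩ => (forward S u v β hβ).1, fun hA => ⟨-nevC S u v, converse S u v hA⟩⟩,
    fun β hβ => (forward S u v β hβ).2⟩
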